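/- Let γ > 1 and let f^num be a continuous, consistent numerical two-point flux for the compressible Euler equations that is EC and PEP. Then for every p > 0, every v ∈ ℝ, and all densities ρ₋ ≠ ρ₊ > 0 one has f^num((ρ₋, v, p), (ρ₊, v, p)) = ( ρ^log v, ρ^log v² + p, (1/2) ρ^log v³ + (γ/(γ−1)) p v ). -/

import Mathlib

noncomputable section
open Real

/-- A state `u = (ρ, v, p)` of the 1D compressible Euler equations:
density `u.1`, velocity `u.2.1`, pressure `u.2.2`. -/
abbrev EulerState := ℝ × ℝ × ℝ

/-- Entropy variables `w(u)` for the entropy `U = -ρ s/(γ-1)`, `s = log(p/ρ^γ)`. -/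
def entVar (γ : ℝ) (u : EulerState) : EulerState :=
  (γ/(γ-1) - Real.log (u.2.2 / u.1 ^ γ)/(γ-1) - u.1 * u.2.1^2/(2*u.2.2),
   u.1*u.2.1/u.2.2,
   -(u.1/u.2.2))

/-- Euclidean dot product on `ℝ × ℝ × ℝ`. -/
def dot3 (a b : EulerState) : ℝ := a.1*b.1 + a.2.1*b.2.1 + a.2.2*b.2.2

/-- Logarithmic mean `(a₊ - a₋)/(log a₊ - log a₋)`. -/
def logMean (am ap : ℝ) : ℝ := (ap - am)/(Real.log ap - Real.log am)

/-- Entropy conservation (EC) in the sense of Tadmor: `⟦w⟧ ⬝ f^num = ⟦ψ⟧`, `ψ = ρ v`. -/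
def IsEC (γ : ℝ) (f : EulerState → EulerState → EulerState) : Prop :=
  ∀ um up : EulerState, 0 < um.1 → 0 < um.2.2 → 0 < up.1 → 0 < up.2.2 →
    dot3 (entVar γ up - entVar γ um) (f um up) = up.1 * up.2.1 - um.1 * um.2.1

/-- Pressure equilibrium preservation (PEP). -/
def IsPEP (f : EulerState → EulerState → EulerState) : Prop :=
  ∃ c₁ c₂ : ℝ → ℝ → ℝ, ∀ ρm ρp v p : ℝ, 0 < ρm → 0 < ρp → 0 < p →
    (f (ρm, v, p) (ρp, v, p)).2.1 = v * (f (ρm, v, p) (ρp, v, p)).1 + c₁ p v ∧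
    (f (ρm, v, p) (ρp, v, p)).2.2 = (v^2/2) * (f (ρm, v, p) (ρp, v, p)).1 + c₂ p v

/-- Consistency: `f^num(u, u) = f(u)`, the Euler flux. -/
def IsConsistent (γ : ℝ) (f : EulerState → EulerState → EulerState) : Prop :=
  ∀ ρ v p : ℝ, 0 < ρ → 0 < p →
    f (ρ, v, p) (ρ, v, p) = (ρ*v, ρ*v^2 + p, (p/(γ-1) + ρ*v^2/2 + p)*v)

/-- a continuous, consistent, EC and PEP two-point flux is uniquely
determined at every pressure equilibrium: `f^num = (ρ^log v, ρ^log v² + p,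
(1/2) ρ^log v³ + (γ/(γ-1)) p v)`. -/
theorem ec_pep_flux_at_pressure_equilibrium
    (γ : ℝ) (hγ : 1 < γ) (f : EulerState → EulerState → EulerState)
    (hcont : ContinuousOn (fun q : EulerState × EulerState => f q.1 q.2)
      {q : EulerState × EulerState | 0 < q.1.1 ∧ 0 < q.1.2.2 ∧ 0 < q.2.1 ∧ 0 < q.2.2.2})
    (hcons : IsConsistent γ f)
    (hEC : IsEC γ f) (hPEP : IsPEP f) :
    ∀ p v ρm ρp : ℝ, 0 < p → 0 < ρm → 0 < ρp → ρm ≠ ρp →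
      f (ρm, v, p) (ρp, v, p)
        = (logMean ρm ρp * v,
           logMean ρm ρp * v^2 + p,
           (1/2) * logMean ρm ρp * v^3 + (γ/(γ-1)) * p * v) := by

  obtain ⟨c₁, c₂, hc⟩ := hPEP
  intro p v ρm ρp hp hρm hρp hne
  have hγ1 : γ - 1 ≠ 0 := by linarith
  have hp' : p ≠ 0 := ne_of_gt hp
  -- determine c₁, c₂ via consistency at ρ = 1
  have hc1 := hc 1 1 v p one_pos one_pos hp
  rw [hcons 1 v p one_pos hp] at hc1
  have hC1 : c₁ p v = p := by
    have := hc1.1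
    simp only at this
    linear_combination -this
  have hC2 : c₂ p v = γ/(γ-1) * p * v := by
    have := hc1.2
    simp only at this
    field_simp at this
    have h4 : c₂ p v * (γ - 1) = γ * p * v := by linear_combination -this/2
    field_simp
    linear_combination h4
  -- PEP relations at this pair
  obtain ⟨h1, h2⟩ := hc ρm ρp v p hρm hρp hp
  rw [hC1] at h1
  rw [hC2] at h2
  -- entropy conservation
  have hec := hEC (ρm, v, p) (ρp, v, p) hρm hp hρp hp
  simp only [entVar, dot3, Prod.fst_sub, Prod.snd_sub] at hec
  rw [Real.log_div hp' (ne_of_gt (Real.rpow_pos_of_pos hρp γ)),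
      Real.log_div hp' (ne_of_gt (Real.rpow_pos_of_pos hρm γ)),
      Real.log_rpow hρp, Real.log_rpow hρm] at hec
  have hL : Real.log ρp - Real.log ρm ≠ 0 := by
    intro h
    apply hne
    have : Real.log ρm = Real.log ρp := by linarith [sub_eq_zero.mp h]
    calc ρm = Real.exp (Real.log ρm) := (Real.exp_log hρm).symm
      _ = Real.exp (Real.log ρp) := by rw [this]
      _ = ρp := Real.exp_log hρp
  rw [h1, h2] at hec
  have hF1 : (f (ρm, v, p) (ρp, v, p)).1
      = v * (ρp - ρm) / (Real.log ρp - Real.log ρm) := by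
    rw [eq_div_iff hL]
    field_simp at hec
    have hγ0 : γ ≠ 0 := by linarith
    have hne0 : (4:ℝ)*p^4*γ*(γ-1) ≠ 0 := by positivity
    have key : (4:ℝ)*p^4*γ*(γ-1) * ((f (ρm, v, p) (ρp, v, p)).1 * (Real.log ρp - Real.log ρm))
        = (4:ℝ)*p^4*γ*(γ-1) * (v * (ρp - ρm)) := by linear_combination (2*p^3*(γ-1)) * hec
    exact mul_left_cancel₀ hne0 key
  have hLM : logMean ρm ρp = (ρp - ρm) / (Real.log ρp - Real.log ρm) := rfl
  refine Prod.ext ?_ (Prod.ext ?_ ?_)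
  · rw [hF1, hLM]; ring
  · simp only [h1, hF1, hLM]; ring
  · simp only [h2, hF1, hLM]; ring
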